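/- Let A and B be nonempty closed convex subsets of X, set T := P_B ∘ P_A, and suppose T has no fixed point. Set R := (rec A) ∩ (rec B) and suppose that R ∩ R^⊕ is a ray. Then for every x ∈ X the sequence (Tⁿx/‖Tⁿx‖) (eventually well defined) converges. -/

import Mathlib

set_option linter.unusedSectionVars false

open Filter Topology RealInnerProductSpace

variable {X : Type*} [NormedAddCommGroup X] [InnerProductSpace ℝ X] [FiniteDimensional ℝ X]

/-- `P` is the projector onto the set `C`: `P x` is a point of `C` nearest to `x`. -/
def IsProjector (C : Set X) (P : X → X) : Prop :=
  ∀ x : X, P x ∈ C ∧ ∀ y ∈ C, ‖x - P x‖ ≤ ‖x - y‖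

/-- The recession cone `rec S = {x : x + S ⊆ S}` of a set `S`. -/
def recCone (S : Set X) : Set X := {x : X | ∀ s ∈ S, x + s ∈ S}

/-- `S^⊕ = −(S^⊖) = {x : ⟪x, s⟫ ≥ 0 for all s ∈ S}`. -/
def plusCone (S : Set X) : Set X := {x : X | ∀ s ∈ S, (0 : ℝ) ≤ inner ℝ x s}

/-- A ray: the set of nonnegative multiples of some nonzero direction `d`. -/
def IsRay (S : Set X) : Prop := ∃ d : X, d ≠ 0 ∧ S = {y : X | ∃ t : ℝ, 0 ≤ t ∧ y = t • d}

theorem proj_inner_le {C : Set X} (hC : Convex ℝ C) {P : X → X} (hP : IsProjector C P)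
    (x : X) {y : X} (hy : y ∈ C) : ⟪x - P x, y - P x⟫ ≤ 0 := by
  have hPx := (hP x).1
  have heq : ‖x - P x‖ = ⨅ w : C, ‖x - w‖ := by
    have : Nonempty C := ⟨⟨P x, hPx⟩⟩
    refine le_antisymm (le_ciInf fun w => (hP x).2 w w.2) ?_
    have hbdd : BddBelow (Set.range fun w : C => ‖x - ↑w‖) := by
      refine ⟨0, ?_⟩; rintro _ ⟨w, rfl⟩; exact norm_nonneg _
    exact ciInf_le hbdd ⟨P x, hPx⟩
  exact (norm_eq_iInf_iff_real_inner_le_zero hC hPx).1 heq y hy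

theorem proj_unique {C : Set X} (hC : Convex ℝ C) {P : X → X} (hP : IsProjector C P)
    (x : X) {y : X} (hy : y ∈ C) (h : ‖x - y‖ ≤ ‖x - P x‖) : y = P x := by
  have h1 := proj_inner_le hC hP x hy
  have h2 : ‖(x - P x) - (y - P x)‖ ^ 2
      = ‖x - P x‖ ^ 2 - 2 * ⟪x - P x, y - P x⟫ + ‖y - P x‖ ^ 2 := by
    rw [norm_sub_sq_real]
  have h3 : (x - P x) - (y - P x) = x - y := by abel
  rw [h3] at h2
  have h4 : ‖y - P x‖ ^ 2 ≤ 0 := by nlinarith [norm_nonneg (x - y), norm_nonneg (x - P x)]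
  have h5 : ‖y - P x‖ = 0 := by nlinarith [norm_nonneg (y - P x)]
  exact norm_sub_eq_zero_iff.1 h5

theorem proj_nonexpansive {C : Set X} (hC : Convex ℝ C) {P : X → X} (hP : IsProjector C P)
    (x y : X) : ‖P x - P y‖ ≤ ‖x - y‖ := by
  have h1 := proj_inner_le hC hP x (hP y).1
  have h2 := proj_inner_le hC hP y (hP x).1
  have key : ‖P x - P y‖ ^ 2 ≤ ⟪x - y, P x - P y⟫ := by
    have eA : ⟪x - P x, P x - P y⟫ = -⟪x - P x, P y - P x⟫ := by
      rw [← inner_neg_right]; congr 1; abel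
    have hxy : x - y = (P x - P y) + ((x - P x) - (y - P y)) := by abel
    have hexp : ⟪x - y, P x - P y⟫
        = ⟪P x - P y, P x - P y⟫ + (⟪x - P x, P x - P y⟫ - ⟪y - P y, P x - P y⟫) := by
      rw [hxy, inner_add_left, inner_sub_left, inner_sub_left]
    have h7 : ⟪P x - P y, P x - P y⟫ = ‖P x - P y‖ ^ 2 := real_inner_self_eq_norm_sq _
    linarith
  have h5 := real_inner_le_norm (x - y) (P x - P y)
  nlinarith [norm_nonneg (P x - P y), norm_nonneg (x - y)]

theorem proj_continuous {C : Set X} (hC : Convex ℝ C) {P : X → X} (hP : IsProjector C P) :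
    Continuous P := by
  have : LipschitzWith 1 P := LipschitzWith.of_dist_le_mul fun x y => by
    rw [dist_eq_norm, dist_eq_norm, NNReal.coe_one, one_mul]
    exact proj_nonexpansive hC hP x y
  exact this.continuous

theorem stmt12_aux {A B : Set X} (hAcl : IsClosed A) (hAconv : Convex ℝ A)
    (hBcl : IsClosed B) (hBconv : Convex ℝ B)
    {PA PB : X → X} (hPA : IsProjector A PA) (hPB : IsProjector B PB)
    (hfix : ∀ y : X, PB (PA y) ≠ y)
    {R : Set X} (hR : R = recCone A ∩ recCone B)
    (hray : IsRay (R ∩ plusCone R))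
    (xn : ℕ → X) (hstep : ∀ n, xn (n + 1) = PB (PA (xn n))) :
    ∃ q : X, Tendsto (fun n : ℕ => ‖xn n‖⁻¹ • xn n) atTop (𝓝 q) := by
  obtain ⟨d0, hd0, hset⟩ := hray
  have hPAc : Continuous PA := proj_continuous hAconv hPA
  have hPBc : Continuous PB := proj_continuous hBconv hPB
  have haA : ∀ n, PA (xn n) ∈ A := fun n => (hPA _).1
  have hxB : ∀ n, xn (n + 1) ∈ B := fun n => by rw [hstep n]; exact (hPB _).1
  -- monotone gap sequences
  have hde : ∀ n, ‖xn (n+1) - PA (xn (n+1))‖ ≤ ‖PA (xn n) - xn (n+1)‖ := by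
    intro n
    calc ‖xn (n+1) - PA (xn (n+1))‖ ≤ ‖xn (n+1) - PA (xn n)‖ :=
          (hPA (xn (n+1))).2 (PA (xn n)) (haA n)
      _ = ‖PA (xn n) - xn (n+1)‖ := norm_sub_rev _ _
  have hed : ∀ n, ‖PA (xn (n+1)) - xn (n+1+1)‖ ≤ ‖xn (n+1) - PA (xn (n+1))‖ := by
    intro n
    calc ‖PA (xn (n+1)) - xn (n+1+1)‖ = ‖PA (xn (n+1)) - PB (PA (xn (n+1)))‖ := by
          rw [hstep (n+1)]
      _ ≤ ‖PA (xn (n+1)) - xn (n+1)‖ := (hPB (PA (xn (n+1)))).2 (xn (n+1)) (hxB n)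
      _ = ‖xn (n+1) - PA (xn (n+1))‖ := norm_sub_rev _ _
  have heanti : Antitone (fun n => ‖PA (xn n) - xn (n+1)‖) :=
    antitone_nat_of_succ_le fun n => le_trans (hed n) (hde n)
  set δ : ℝ := ⨅ n, ‖PA (xn n) - xn (n+1)‖ with hδdef
  have helim : Tendsto (fun n => ‖PA (xn n) - xn (n+1)‖) atTop (𝓝 δ) :=
    tendsto_atTop_ciInf heanti ⟨0, by rintro _ ⟨n, rfl⟩; exact norm_nonneg _⟩
  have helim' : Tendsto (fun n => ‖PA (xn (n+1)) - xn (n+1+1)‖) atTop (𝓝 δ) :=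
    helim.comp (tendsto_add_atTop_nat 1)
  have hdlim : Tendsto (fun n => ‖xn (n+1) - PA (xn (n+1))‖) atTop (𝓝 δ) :=
    tendsto_of_tendsto_of_tendsto_of_le_of_le helim' helim hed hde
  -- the norms tend to infinity
  have hnormtop : Tendsto (fun n => ‖xn n‖) atTop atTop := by
    by_contra hcon
    rw [tendsto_atTop] at hcon
    push_neg at hcon
    obtain ⟨M, hM⟩ := hcon
    have hfreq : ∃ᶠ n in atTop, xn n ∈ Metric.closedBall (0 : X) M := by
      refine hM.mono fun n hn => ?_
      rw [Metric.mem_closedBall, dist_zero_right]; exact hn.le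
    obtain ⟨p, -, σ, hσm, hσ⟩ :=
      tendsto_subseq_of_frequently_bounded Metric.isBounded_closedBall hfreq
    have hσtop : Tendsto σ atTop atTop := hσm.tendsto_atTop
    have h1 : Tendsto (fun k => xn (σ k + 1)) atTop (𝓝 (PB (PA p))) := by
      have := ((hPBc.comp hPAc).tendsto p).comp hσ
      exact this.congr fun k => (hstep (σ k)).symm
    have h2 : Tendsto (fun k => PA (xn (σ k + 1))) atTop (𝓝 (PA (PB (PA p)))) :=
      (hPAc.tendsto _).comp h1
    have h3 : Tendsto (fun k => xn (σ k + 1 + 1)) atTop (𝓝 (PB (PA (PB (PA p))))) := by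
      have := (hPBc.tendsto _).comp h2
      exact this.congr fun k => (hstep (σ k + 1)).symm
    have hδ1 : δ = ‖PB (PA p) - PA (PB (PA p))‖ :=
      tendsto_nhds_unique (hdlim.comp hσtop) (h1.sub h2).norm
    have hδ2 : δ = ‖PA (PB (PA p)) - PB (PA (PB (PA p)))‖ :=
      tendsto_nhds_unique (helim'.comp hσtop) (h2.sub h3).norm
    have hp1B : PB (PA p) ∈ B := (hPB _).1
    have hle : ‖PA (PB (PA p)) - PB (PA p)‖ ≤ ‖PA (PB (PA p)) - PB (PA (PB (PA p)))‖ := by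
      rw [norm_sub_rev, ← hδ1, hδ2]
    have huniq := proj_unique hBconv hPB (PA (PB (PA p))) hp1B hle
    exact hfix (PB (PA p)) huniq.symm
  -- monotone inner products along recession directions
  have hmono : ∀ r ∈ R, ∀ n, ⟪xn 0, r⟫ ≤ ⟪xn n, r⟫ := by
    intro r hr
    rw [hR] at hr
    obtain ⟨hrA, hrB⟩ := hr
    have hstep1 : ∀ n, ⟪xn n, r⟫ ≤ ⟪xn (n+1), r⟫ := by
      intro n
      have s1 : ⟪xn n, r⟫ ≤ ⟪PA (xn n), r⟫ := by
        have hy : r + PA (xn n) ∈ A := hrA _ (haA n)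
        have h := proj_inner_le hAconv hPA (xn n) hy
        have e1 : r + PA (xn n) - PA (xn n) = r := by abel
        rw [e1, inner_sub_left] at h
        linarith
      have s2 : ⟪PA (xn n), r⟫ ≤ ⟪xn (n+1), r⟫ := by
        have hy : r + xn (n+1) ∈ B := hrB _ (hxB n)
        have h := proj_inner_le hBconv hPB (PA (xn n)) hy
        rw [← hstep n] at h
        have e1 : r + xn (n+1) - xn (n+1) = r := by abel
        rw [e1, inner_sub_left] at h
        linarith
      linarith
    intro n
    induction n with
    | zero => exact le_refl _
    | succ m ih => exact ih.trans (hstep1 m)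
  -- bound on gaps
  have hdbound : ∀ n, ‖xn n - PA (xn n)‖ ≤ max ‖xn 0 - PA (xn 0)‖ ‖PA (xn 0) - xn 1‖ := by
    intro n
    match n with
    | 0 => exact le_max_left _ _
    | (m+1) =>
      exact le_trans (hde m) (le_trans (heanti (Nat.zero_le m)) (le_max_right _ _))
  have hd0norm : ‖d0‖ ≠ 0 := norm_ne_zero_iff.2 hd0
  refine ⟨‖d0‖⁻¹ • d0, ?_⟩
  -- every subsequential limit is the unit vector of the ray
  have key : ∀ σ : ℕ → ℕ, StrictMono σ → ∀ q' : X,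
      Tendsto (fun k => ‖xn (σ k)‖⁻¹ • xn (σ k)) atTop (𝓝 q') → q' = ‖d0‖⁻¹ • d0 := by
    intro σ hσm q' hq'
    have hσtop := hσm.tendsto_atTop
    have hxtop : Tendsto (fun k => ‖xn (σ k)‖) atTop atTop := hnormtop.comp hσtop
    have hinv : Tendsto (fun k => ‖xn (σ k)‖⁻¹) atTop (𝓝 0) := hxtop.inv_tendsto_atTop
    have hev1 : ∀ᶠ k in atTop, 1 ≤ ‖xn (σ k)‖ := hxtop.eventually_ge_atTop 1
    have hevσ : ∀ᶠ k in atTop, 1 ≤ σ k := hσtop.eventually_ge_atTop 1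
    have hnq' : ‖q'‖ = 1 := by
      have ht : Tendsto (fun k => ‖(‖xn (σ k)‖⁻¹ • xn (σ k) : X)‖) atTop (𝓝 ‖q'‖) := hq'.norm
      have heq : (fun k => ‖(‖xn (σ k)‖⁻¹ • xn (σ k) : X)‖) =ᶠ[atTop] fun _ => (1:ℝ) := by
        filter_upwards [hev1] with k hk
        have hpos : (0:ℝ) < ‖xn (σ k)‖ := lt_of_lt_of_le one_pos hk
        rw [norm_smul, norm_inv, norm_norm, inv_mul_cancel₀ (ne_of_gt hpos)]
      exact tendsto_nhds_unique (Tendsto.congr' heq ht) tendsto_const_nhds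
    have hq'B : q' ∈ recCone B := by
      intro s hs
      have hlim : Tendsto (fun k => (1 - ‖xn (σ k)‖⁻¹) • s + ‖xn (σ k)‖⁻¹ • xn (σ k)) atTop
          (𝓝 (((1:ℝ) - 0) • s + q')) :=
        ((tendsto_const_nhds.sub hinv).smul_const s).add hq'
      have hmem : ∀ᶠ k in atTop, (1 - ‖xn (σ k)‖⁻¹) • s + ‖xn (σ k)‖⁻¹ • xn (σ k) ∈ B := by
        filter_upwards [hev1, hevσ] with k hk hk1
        have h0 : (0:ℝ) ≤ ‖xn (σ k)‖⁻¹ := inv_nonneg.2 (norm_nonneg _)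
        have h1' : ‖xn (σ k)‖⁻¹ ≤ 1 := inv_le_one_of_one_le₀ hk
        obtain ⟨m, hm⟩ : ∃ m, σ k = m + 1 := ⟨σ k - 1, (Nat.succ_pred_eq_of_pos hk1).symm⟩
        have hxmem : xn (σ k) ∈ B := by rw [hm]; exact hxB m
        exact hBconv hs hxmem (by linarith) h0 (by ring)
      have hmem2 := hBcl.mem_of_tendsto hlim hmem
      have heq2 : ((1:ℝ) - 0) • s + q' = q' + s := by simp [add_comm]
      rwa [heq2] at hmem2
    have haq : Tendsto (fun k => ‖xn (σ k)‖⁻¹ • PA (xn (σ k))) atTop (𝓝 q') := by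
      have hz : Tendsto (fun k => ‖xn (σ k)‖⁻¹ • (PA (xn (σ k)) - xn (σ k))) atTop (𝓝 (0:X)) := by
        refine squeeze_zero_norm (fun k => ?_)
          (show Tendsto (fun k => ‖xn (σ k)‖⁻¹ * max ‖xn 0 - PA (xn 0)‖ ‖PA (xn 0) - xn 1‖)
            atTop (𝓝 0) by simpa using hinv.mul_const (max ‖xn 0 - PA (xn 0)‖ ‖PA (xn 0) - xn 1‖))
        rw [norm_smul, norm_inv, norm_norm, norm_sub_rev]
        exact mul_le_mul_of_nonneg_left (hdbound (σ k)) (inv_nonneg.2 (norm_nonneg _))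
      have hsum := hq'.add hz
      rw [add_zero] at hsum
      exact hsum.congr fun k => by rw [← smul_add]; congr 1; abel
    have hq'A : q' ∈ recCone A := by
      intro s hs
      have hlim : Tendsto (fun k => (1 - ‖xn (σ k)‖⁻¹) • s + ‖xn (σ k)‖⁻¹ • PA (xn (σ k))) atTop
          (𝓝 (((1:ℝ) - 0) • s + q')) :=
        ((tendsto_const_nhds.sub hinv).smul_const s).add haq
      have hmem : ∀ᶠ k in atTop, (1 - ‖xn (σ k)‖⁻¹) • s + ‖xn (σ k)‖⁻¹ • PA (xn (σ k)) ∈ A := by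
        filter_upwards [hev1] with k hk
        have h0 : (0:ℝ) ≤ ‖xn (σ k)‖⁻¹ := inv_nonneg.2 (norm_nonneg _)
        have h1' : ‖xn (σ k)‖⁻¹ ≤ 1 := inv_le_one_of_one_le₀ hk
        exact hAconv hs (haA (σ k)) (by linarith) h0 (by ring)
      have hmem2 := hAcl.mem_of_tendsto hlim hmem
      have heq2 : ((1:ℝ) - 0) • s + q' = q' + s := by simp [add_comm]
      rwa [heq2] at hmem2
    have hq'P : q' ∈ plusCone R := by
      intro r hr
      have hineq : ∀ᶠ k in atTop,
          ‖xn (σ k)‖⁻¹ * ⟪xn 0, r⟫ ≤ ⟪(‖xn (σ k)‖⁻¹ • xn (σ k) : X), r⟫ := by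
        filter_upwards [hev1] with k hk
        rw [real_inner_smul_left]
        exact mul_le_mul_of_nonneg_left (hmono r hr (σ k)) (inv_nonneg.2 (norm_nonneg _))
      have hL : Tendsto (fun k => ‖xn (σ k)‖⁻¹ * ⟪xn 0, r⟫) atTop (𝓝 0) := by
        simpa using hinv.mul_const ⟪xn 0, r⟫
      have hRt : Tendsto (fun k => ⟪(‖xn (σ k)‖⁻¹ • xn (σ k) : X), r⟫) atTop (𝓝 ⟪q', r⟫) :=
        hq'.inner tendsto_const_nhds
      exact le_of_tendsto_of_tendsto hL hRt hineq
    have hmemray : q' ∈ R ∩ plusCone R := ⟨by rw [hR]; exact ⟨hq'A, hq'B⟩, hq'P⟩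
    rw [hset] at hmemray
    obtain ⟨t, ht0, hq't⟩ := hmemray
    have ht : t * ‖d0‖ = 1 := by
      rw [← hnq', hq't, norm_smul, Real.norm_eq_abs, abs_of_nonneg ht0]
    have htval : t = ‖d0‖⁻¹ := eq_inv_of_mul_eq_one_right (by rw [mul_comm]; exact ht)
    rw [hq't, htval]
  -- conclude convergence
  by_contra hcon
  rw [Metric.tendsto_atTop] at hcon
  push_neg at hcon
  obtain ⟨ε, hε, hfreq⟩ := hcon
  have hfreq' : ∃ᶠ n in atTop, ε ≤ dist (‖xn n‖⁻¹ • xn n) (‖d0‖⁻¹ • d0) :=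
    frequently_atTop.2 fun N => by obtain ⟨n, hn1, hn2⟩ := hfreq N; exact ⟨n, hn1, hn2⟩
  obtain ⟨φ, hφm, hφ⟩ := Filter.extraction_of_frequently_atTop hfreq'
  have hball : ∀ k, (‖xn (φ k)‖⁻¹ • xn (φ k) : X) ∈ Metric.closedBall (0:X) 1 := by
    intro k
    rw [Metric.mem_closedBall, dist_zero_right, norm_smul, norm_inv, norm_norm]
    rcases eq_or_ne ‖xn (φ k)‖ 0 with h | h
    · simp [h]
    · rw [inv_mul_cancel₀ h]
  obtain ⟨q'', -, ψ, hψm, hψ⟩ := tendsto_subseq_of_bounded Metric.isBounded_closedBall hball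
  have hqq := key (fun k => φ (ψ k)) (hφm.comp hψm) q'' hψ
  rw [hqq] at hψ
  have h0 := tendsto_iff_dist_tendsto_zero.1 hψ
  have : ε ≤ 0 := ge_of_tendsto' h0 fun k => hφ (ψ k)
  linarith

/-- For fixed-point free `T = P_B ∘ P_A` and `R = rec A ∩ rec B`,
if `R ∩ R^⊕` is a ray then the normalized iterates `Tⁿx/‖Tⁿx‖` converge for every `x`. -/
theorem stmt12 (A B : Set X) (hAne : A.Nonempty) (hAcl : IsClosed A) (hAconv : Convex ℝ A)
    (hBne : B.Nonempty) (hBcl : IsClosed B) (hBconv : Convex ℝ B)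
    (PA PB : X → X) (hPA : IsProjector A PA) (hPB : IsProjector B PB)
    (T : X → X) (hT : T = PB ∘ PA) (hfix : ∀ x : X, T x ≠ x)
    (R : Set X) (hR : R = recCone A ∩ recCone B)
    (hray : IsRay (R ∩ plusCone R)) :
    ∀ x : X, ∃ q : X,
      Tendsto (fun n : ℕ => ‖T^[n] x‖⁻¹ • T^[n] x) atTop (nhds q) := by
  intro x
  have hfix' : ∀ y : X, PB (PA y) ≠ y := fun y h => hfix y (by rw [hT]; exact h)
  exact stmt12_aux hAcl hAconv hBcl hBconv hPA hPB hfix' hR hray (fun n => T^[n] x)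
    (fun n => by
      show T^[n+1] x = PB (PA (T^[n] x))
      rw [Function.iterate_succ_apply', hT]; rfl)
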